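/- Let n, k satisfy 4 ≤ 2k ≤ n and let G be a collection of subsets of [n], each of size at most k. Then F(n,k,G) = {S ∈ C([n],k) : S ⪯ G for some G ∈ G} is an intersecting family if and only if for every G, H ∈ G (not necessarily distinct) there exists l ∈ [n] with μ_G(l) + μ_H(l) > l. -/

import Mathlib

open Finset

/-- 1-indexed i-th smallest element of a finset of naturals (0 if out of range). -/
def nth (A : Finset ℕ) (i : ℕ) : ℕ := (A.sort (· ≤ ·)).getD (i - 1) 0

/-- Elementwise order on finsets of equal size: `A ≤ B`. -/
def eLE (A B : Finset ℕ) : Prop :=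
  A.card = B.card ∧ ∀ i, 1 ≤ i → i ≤ B.card → nth A i ≤ nth B i

/-- `A ⪯ B`: `|A| ≥ |B|` and the i-th smallest of `A` is ≤ the i-th smallest of `B` for `i ≤ |B|`. -/
def preceq (A B : Finset ℕ) : Prop :=
  B.card ≤ A.card ∧ ∀ i, 1 ≤ i → i ≤ B.card → nth A i ≤ nth B i

/-- `μ_X(l) = |X ∩ [l]|`. -/
def mu (X : Finset ℕ) (l : ℕ) : ℕ := (X ∩ Finset.Icc 1 l).card

/-- `G ∼_si H` (within `[n]`): every `G' ≤ G` and `H' ≤ H` with `G', H' ⊆ [n]` intersect. -/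
def sInt (n : ℕ) (G H : Finset ℕ) : Prop :=
  ∀ G' H' : Finset ℕ, G' ⊆ Finset.Icc 1 n → H' ⊆ Finset.Icc 1 n →
    eLE G' G → eLE H' H → (G' ∩ H').Nonempty

/-- `F(n,k,𝒢)`: the k-subsets `S` of `[n]` with `S ⪯ G` for some `G ∈ 𝒢`. -/
def Fam (n k : ℕ) (𝒢 : Set (Finset ℕ)) : Set (Finset ℕ) :=
  {S | S ⊆ Finset.Icc 1 n ∧ S.card = k ∧ ∃ G ∈ 𝒢, preceq S G}

/-- A family is intersecting if every two members (possibly equal) intersect. -/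
def IsIntersecting (𝒜 : Set (Finset ℕ)) : Prop :=
  ∀ A ∈ 𝒜, ∀ B ∈ 𝒜, (A ∩ B).Nonempty

/-- The type of `G`: the largest `r` with `g_r < k + r`. -/
def typeOf (k : ℕ) (G : Finset ℕ) : ℕ :=
  ((Finset.range (G.card + 1)).filter fun r => 1 ≤ r ∧ nth G r < k + r).sup id

/-- `π(G) = {g_1, …, g_r}` where `r` is the type of `G`. -/
def piG (k : ℕ) (G : Finset ℕ) : Finset ℕ :=
  ((G.sort (· ≤ ·)).take (typeOf k G)).toFinset

lemma nth_mem {A : Finset ℕ} {i : ℕ} (h1 : 1 ≤ i) (h2 : i ≤ A.card) : nth A i ∈ A := by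
  have hl : i - 1 < (A.sort (· ≤ ·)).length := by
    rw [Finset.length_sort]; omega
  rw [nth, List.getD_eq_getElem _ _ hl]
  exact (Finset.mem_sort _).1 (List.getElem_mem hl)

lemma nth_lt_nth {A : Finset ℕ} {i j : ℕ} (h1 : 1 ≤ i) (hij : i < j) (hj : j ≤ A.card) :
    nth A i < nth A j := by
  have hli : i - 1 < (A.sort (· ≤ ·)).length := by rw [Finset.length_sort]; omega
  have hlj : j - 1 < (A.sort (· ≤ ·)).length := by rw [Finset.length_sort]; omega
  rw [nth, nth, List.getD_eq_getElem _ _ hli, List.getD_eq_getElem _ _ hlj]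
  exact List.Pairwise.rel_get_of_lt (Finset.sortedLT_sort A).pairwise (by simpa using by omega)

lemma nth_le_nth {A : Finset ℕ} {i j : ℕ} (h1 : 1 ≤ i) (hij : i ≤ j) (hj : j ≤ A.card) :
    nth A i ≤ nth A j := by
  rcases eq_or_lt_of_le hij with rfl | h
  · exact le_refl _
  · exact (nth_lt_nth h1 h hj).le

lemma exists_nth {A : Finset ℕ} {x : ℕ} (hx : x ∈ A) :
    ∃ i, 1 ≤ i ∧ i ≤ A.card ∧ nth A i = x := by
  have : x ∈ A.sort (· ≤ ·) := (Finset.mem_sort _).2 hx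
  obtain ⟨m, hm, hget⟩ := List.mem_iff_getElem.1 this
  refine ⟨m + 1, by omega, by have := hm; rw [Finset.length_sort] at this; omega, ?_⟩
  rw [nth]
  simpa using (List.getD_eq_getElem _ 0 (by simpa using hm)).trans hget

lemma mu_le_card {A : Finset ℕ} {l : ℕ} : mu A l ≤ A.card :=
  Finset.card_le_card (Finset.inter_subset_left)

lemma mu_mono {A : Finset ℕ} {l l' : ℕ} (h : l ≤ l') : mu A l ≤ mu A l' :=
  Finset.card_le_card (Finset.inter_subset_inter le_rfl (Finset.Icc_subset_Icc le_rfl h))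

lemma nth_le_of_le_mu {A : Finset ℕ} {l r : ℕ} (h1 : 1 ≤ r) (h : r ≤ mu A l) : nth A r ≤ l := by
  by_contra hlt
  push_neg at hlt
  have hrc : r ≤ A.card := le_trans h mu_le_card
  have hsub : A ∩ Finset.Icc 1 l ⊆ (Finset.Icc 1 (r-1)).image (nth A) := by
    intro x hx
    rw [Finset.mem_inter, Finset.mem_Icc] at hx
    obtain ⟨i, hi1, hic, hie⟩ := exists_nth hx.1
    have : i ≤ r - 1 := by
      by_contra hir
      push_neg at hir
      have : nth A r ≤ nth A i := nth_le_nth h1 (by omega) hic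
      omega
    exact Finset.mem_image.2 ⟨i, Finset.mem_Icc.2 ⟨hi1, this⟩, hie⟩
  have := Finset.card_le_card hsub
  have h2 := Finset.card_image_le (s := Finset.Icc 1 (r-1)) (f := nth A)
  rw [Nat.card_Icc] at h2
  rw [mu] at h
  omega

lemma le_mu_of_nth_le {A : Finset ℕ} {l r : ℕ} (hA : ∀ x ∈ A, 1 ≤ x) (h1 : 1 ≤ r)
    (hr : r ≤ A.card) (h : nth A r ≤ l) : r ≤ mu A l := by
  have hsub : (Finset.Icc 1 r).image (nth A) ⊆ A ∩ Finset.Icc 1 l := by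
    intro x hx
    rw [Finset.mem_image] at hx
    obtain ⟨i, hi, rfl⟩ := hx
    rw [Finset.mem_Icc] at hi
    have hmem : nth A i ∈ A := nth_mem hi.1 (le_trans hi.2 hr)
    exact Finset.mem_inter.2 ⟨hmem, Finset.mem_Icc.2 ⟨hA _ hmem,
      le_trans (nth_le_nth hi.1 hi.2 hr) h⟩⟩
  have hinj : Set.InjOn (nth A) (Finset.Icc 1 r) := by
    intro a ha b hb hab
    simp only [Finset.coe_Icc, Set.mem_Icc] at ha hb
    by_contra hne
    rcases Nat.lt_or_ge a b with hl' | hl'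
    · have := nth_lt_nth ha.1 hl' (le_trans hb.2 hr); omega
    · have hba : b < a := by omega
      have := nth_lt_nth hb.1 hba (le_trans ha.2 hr); omega
  have := Finset.card_le_card hsub
  rw [Finset.card_image_of_injOn hinj, Nat.card_Icc] at this
  rw [mu]; omega

lemma mu_le_mu_of_preceq {S G : Finset ℕ} {l : ℕ} (hS : ∀ x ∈ S, 1 ≤ x) (h : preceq S G) :
    mu G l ≤ mu S l := by
  set r := mu G l with hr
  rcases Nat.eq_zero_or_pos r with h0 | h1
  · omega
  have hrG : r ≤ G.card := mu_le_card
  have h2 : nth G r ≤ l := nth_le_of_le_mu h1 le_rfl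
  have h3 : nth S r ≤ nth G r := h.2 r h1 hrG
  exact le_mu_of_nth_le hS h1 (le_trans hrG h.1) (le_trans h3 h2)

theorem stmt7 (n k : ℕ) (h4 : 4 ≤ 2 * k) (hn : 2 * k ≤ n) (𝒢 : Set (Finset ℕ))
    (h𝒢 : ∀ G ∈ 𝒢, G ⊆ Finset.Icc 1 n ∧ G.card ≤ k) :
    IsIntersecting (Fam n k 𝒢) ↔
      ∀ G ∈ 𝒢, ∀ H ∈ 𝒢, ∃ l ∈ Finset.Icc 1 n, l < mu G l + mu H l := by
  constructor
  · -- hard direction: intersecting → condition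
    intro hint G hG H hH
    by_contra hno
    push_neg at hno
    obtain ⟨hGn, hGk⟩ := h𝒢 G hG
    obtain ⟨hHn, hHk⟩ := h𝒢 H hH
    have posG : ∀ x ∈ G, 1 ≤ x := fun x hx => (Finset.mem_Icc.1 (hGn hx)).1
    have posH : ∀ x ∈ H, 1 ≤ x := fun x hx => (Finset.mem_Icc.1 (hHn hx)).1
    set cG := G.card with hcG
    set cH := H.card with hcH
    set f : ℕ → ℕ := fun j => j + mu H (nth G j - 1) with hf
    set g : ℕ → ℕ := fun m => m + mu G (nth H m) with hg
    -- bounds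
    have hGmem : ∀ j, 1 ≤ j → j ≤ cG → nth G j ∈ Finset.Icc 1 n :=
      fun j h1 h2 => hGn (nth_mem h1 h2)
    have hHmem : ∀ m, 1 ≤ m → m ≤ cH → nth H m ∈ Finset.Icc 1 n :=
      fun m h1 h2 => hHn (nth_mem h1 h2)
    have hfd : ∀ j, 1 ≤ j → j ≤ cG → f j ≤ nth G j := by
      intro j h1 h2
      have hl := hno (nth G j) (hGmem j h1 h2)
      have hj : j ≤ mu G (nth G j) := le_mu_of_nth_le posG h1 h2 le_rfl
      have hm : mu H (nth G j - 1) ≤ mu H (nth G j) := mu_mono (by omega)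
      simp only [hf]; omega
    have hgd : ∀ m, 1 ≤ m → m ≤ cH → g m ≤ nth H m := by
      intro m h1 h2
      have hl := hno (nth H m) (hHmem m h1 h2)
      have hm : m ≤ mu H (nth H m) := le_mu_of_nth_le posH h1 h2 le_rfl
      simp only [hg]; omega
    have hfmono : ∀ j j', 1 ≤ j → j < j' → j' ≤ cG → f j < f j' := by
      intro j j' h1 hjj hj'
      have : nth G j ≤ nth G j' := nth_le_nth h1 hjj.le hj'
      have : mu H (nth G j - 1) ≤ mu H (nth G j' - 1) := mu_mono (by omega)
      simp only [hf]; omega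
    have hgmono : ∀ m m', 1 ≤ m → m < m' → m' ≤ cH → g m < g m' := by
      intro m m' h1 hmm hm'
      have : nth H m ≤ nth H m' := nth_le_nth h1 hmm.le hm'
      have : mu G (nth H m) ≤ mu G (nth H m') := mu_mono this
      simp only [hg]; omega
    have hfub : ∀ j, j ≤ cG → f j ≤ cG + cH := by
      intro j hj
      have : mu H (nth G j - 1) ≤ cH := mu_le_card
      simp only [hf]; omega
    have hgub : ∀ m, m ≤ cH → g m ≤ cG + cH := by
      intro m hm
      have : mu G (nth H m) ≤ cG := mu_le_card
      simp only [hg]; omega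
    -- the key disjointness of the two merge-position images
    have hfg : ∀ j m, 1 ≤ j → j ≤ cG → 1 ≤ m → m ≤ cH → f j ≠ g m := by
      intro j m hj1 hj2 hm1 hm2
      have hGj1 : 1 ≤ nth G j := posG _ (nth_mem hj1 hj2)
      rcases le_or_gt (nth G j) (nth H m) with hcase | hcase
      · have h1 : j ≤ mu G (nth H m) := le_mu_of_nth_le posG hj1 hj2 hcase
        have h2 : mu H (nth G j - 1) ≤ m - 1 := by
          by_contra hc
          push_neg at hc
          have : nth H m ≤ nth G j - 1 := nth_le_of_le_mu hm1 (by omega)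
          omega
        simp only [hf, hg]; omega
      · have h1 : m ≤ mu H (nth G j - 1) :=
          le_mu_of_nth_le posH hm1 hm2 (by omega)
        have h2 : mu G (nth H m) ≤ j - 1 := by
          by_contra hc
          push_neg at hc
          have : nth G j ≤ nth H m := nth_le_of_le_mu hj1 (by omega)
          omega
        simp only [hf, hg]; omega
    set S := (Finset.Icc 1 cG).image f ∪ Finset.Icc (cG + cH + 1) (k + cH) with hS
    set T := (Finset.Icc 1 cH).image g ∪ Finset.Icc (k + cH + 1) (2*k) with hT
    have hk2 : 2 ≤ k := by omega
    have hfinj : Set.InjOn f (Finset.Icc 1 cG) := by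
      intro a ha b hb hab
      simp only [Finset.coe_Icc, Set.mem_Icc] at ha hb
      by_contra hne
      rcases Nat.lt_or_ge a b with h | h
      · have := hfmono a b ha.1 h hb.2; omega
      · have := hfmono b a hb.1 (by omega) ha.2; omega
    have hginj : Set.InjOn g (Finset.Icc 1 cH) := by
      intro a ha b hb hab
      simp only [Finset.coe_Icc, Set.mem_Icc] at ha hb
      by_contra hne
      rcases Nat.lt_or_ge a b with h | h
      · have := hgmono a b ha.1 h hb.2; omega
      · have := hgmono b a hb.1 (by omega) ha.2; omega
    -- memberships in S/T characterized
    have hScard : S.card = k := by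
      rw [hS, Finset.card_union_of_disjoint, Finset.card_image_of_injOn hfinj,
        Nat.card_Icc, Nat.card_Icc]
      · omega
      · rw [Finset.disjoint_left]
        intro x hx hx'
        rw [Finset.mem_image] at hx
        obtain ⟨j, hj, rfl⟩ := hx
        rw [Finset.mem_Icc] at hj hx'
        have := hfub j hj.2; omega
    have hTcard : T.card = k := by
      rw [hT, Finset.card_union_of_disjoint, Finset.card_image_of_injOn hginj,
        Nat.card_Icc, Nat.card_Icc]
      · omega
      · rw [Finset.disjoint_left]
        intro x hx hx'
        rw [Finset.mem_image] at hx
        obtain ⟨m, hm, rfl⟩ := hx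
        rw [Finset.mem_Icc] at hm hx'
        have := hgub m hm.2; omega
    have hSsub : S ⊆ Finset.Icc 1 n := by
      intro x hx
      rw [hS, Finset.mem_union] at hx
      rw [Finset.mem_Icc]
      rcases hx with hx | hx
      · rw [Finset.mem_image] at hx
        obtain ⟨j, hj, rfl⟩ := hx
        rw [Finset.mem_Icc] at hj
        have := hfub j hj.2
        have : 1 ≤ f j := by simp only [hf]; omega
        omega
      · rw [Finset.mem_Icc] at hx; omega
    have hTsub : T ⊆ Finset.Icc 1 n := by
      intro x hx
      rw [hT, Finset.mem_union] at hx
      rw [Finset.mem_Icc]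
      rcases hx with hx | hx
      · rw [Finset.mem_image] at hx
        obtain ⟨m, hm, rfl⟩ := hx
        rw [Finset.mem_Icc] at hm
        have := hgub m hm.2
        have : 1 ≤ g m := by simp only [hg]; omega
        omega
      · rw [Finset.mem_Icc] at hx; omega
    have posS : ∀ x ∈ S, 1 ≤ x := fun x hx => (Finset.mem_Icc.1 (hSsub hx)).1
    have posT : ∀ x ∈ T, 1 ≤ x := fun x hx => (Finset.mem_Icc.1 (hTsub hx)).1
    have hSG : preceq S G := by
      refine ⟨by rw [hScard]; exact hGk, ?_⟩
      intro j hj1 hj2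
      have hjm : j ≤ mu S (nth G j) := by
        have hsub : (Finset.Icc 1 j).image f ⊆ S ∩ Finset.Icc 1 (nth G j) := by
          intro x hx
          rw [Finset.mem_image] at hx
          obtain ⟨i, hi, rfl⟩ := hx
          rw [Finset.mem_Icc] at hi
          have hfi : f i ≤ f j := by
            rcases eq_or_lt_of_le hi.2 with rfl | h
            · exact le_rfl
            · exact (hfmono i j hi.1 h hj2).le
          refine Finset.mem_inter.2 ⟨?_, Finset.mem_Icc.2 ⟨by simp only [hf]; omega,
            le_trans hfi (hfd j hj1 hj2)⟩⟩
          rw [hS, Finset.mem_union]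
          exact Or.inl (Finset.mem_image.2 ⟨i, Finset.mem_Icc.2 ⟨hi.1, le_trans hi.2 hj2⟩, rfl⟩)
        have hinj' : Set.InjOn f (Finset.Icc 1 j) :=
          hfinj.mono (by intro x hx; simp only [Finset.coe_Icc, Set.mem_Icc] at hx ⊢; omega)
        have := Finset.card_le_card hsub
        rw [Finset.card_image_of_injOn hinj', Nat.card_Icc] at this
        rw [mu]; omega
      exact nth_le_of_le_mu hj1 hjm
    have hTH : preceq T H := by
      refine ⟨by rw [hTcard]; exact hHk, ?_⟩
      intro m hm1 hm2
      have hmm : m ≤ mu T (nth H m) := by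
        have hsub : (Finset.Icc 1 m).image g ⊆ T ∩ Finset.Icc 1 (nth H m) := by
          intro x hx
          rw [Finset.mem_image] at hx
          obtain ⟨i, hi, rfl⟩ := hx
          rw [Finset.mem_Icc] at hi
          have hgi : g i ≤ g m := by
            rcases eq_or_lt_of_le hi.2 with rfl | h
            · exact le_rfl
            · exact (hgmono i m hi.1 h hm2).le
          refine Finset.mem_inter.2 ⟨?_, Finset.mem_Icc.2 ⟨by simp only [hg]; omega,
            le_trans hgi (hgd m hm1 hm2)⟩⟩
          rw [hT, Finset.mem_union]
          exact Or.inl (Finset.mem_image.2 ⟨i, Finset.mem_Icc.2 ⟨hi.1, le_trans hi.2 hm2⟩, rfl⟩)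
        have hinj' : Set.InjOn g (Finset.Icc 1 m) :=
          hginj.mono (by intro x hx; simp only [Finset.coe_Icc, Set.mem_Icc] at hx ⊢; omega)
        have := Finset.card_le_card hsub
        rw [Finset.card_image_of_injOn hinj', Nat.card_Icc] at this
        rw [mu]; omega
      exact nth_le_of_le_mu hm1 hmm
    have hSF : S ∈ Fam n k 𝒢 := ⟨hSsub, hScard, G, hG, hSG⟩
    have hTF : T ∈ Fam n k 𝒢 := ⟨hTsub, hTcard, H, hH, hTH⟩
    obtain ⟨x, hx⟩ := hint S hSF T hTF
    rw [Finset.mem_inter] at hx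
    obtain ⟨hxS, hxT⟩ := hx
    rw [hS, Finset.mem_union] at hxS
    rw [hT, Finset.mem_union] at hxT
    rcases hxS with hxS | hxS <;> rcases hxT with hxT | hxT
    · rw [Finset.mem_image] at hxS hxT
      obtain ⟨j, hj, rfl⟩ := hxS
      obtain ⟨m, hm, he⟩ := hxT
      rw [Finset.mem_Icc] at hj hm
      exact hfg j m hj.1 hj.2 hm.1 hm.2 he.symm
    · rw [Finset.mem_image] at hxS
      obtain ⟨j, hj, rfl⟩ := hxS
      rw [Finset.mem_Icc] at hj hxT
      have := hfub j hj.2; omega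
    · rw [Finset.mem_image] at hxT
      obtain ⟨m, hm, he⟩ := hxT
      rw [Finset.mem_Icc] at hm hxS
      have := hgub m hm.2; omega
    · rw [Finset.mem_Icc] at hxS hxT; omega
  · -- easy direction: condition → intersecting
    intro hcond A hA B hB
    obtain ⟨hAn, hAk, G, hG, hAG⟩ := hA
    obtain ⟨hBn, hBk, H, hH, hBH⟩ := hB
    obtain ⟨l, _, hl⟩ := hcond G hG H hH
    have posA : ∀ x ∈ A, 1 ≤ x := fun x hx => (Finset.mem_Icc.1 (hAn hx)).1
    have posB : ∀ x ∈ B, 1 ≤ x := fun x hx => (Finset.mem_Icc.1 (hBn hx)).1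
    have h1 : mu G l ≤ mu A l := mu_le_mu_of_preceq posA hAG
    have h2 : mu H l ≤ mu B l := mu_le_mu_of_preceq posB hBH
    have hsub : (A ∩ Finset.Icc 1 l) ∪ (B ∩ Finset.Icc 1 l) ⊆ Finset.Icc 1 l :=
      Finset.union_subset Finset.inter_subset_right Finset.inter_subset_right
    have hcard := Finset.card_le_card hsub
    have hiu := Finset.card_inter_add_card_union (A ∩ Finset.Icc 1 l) (B ∩ Finset.Icc 1 l)
    rw [Nat.card_Icc] at hcard
    have hne : ((A ∩ Finset.Icc 1 l) ∩ (B ∩ Finset.Icc 1 l)).Nonempty := by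
      rw [← Finset.card_pos]
      simp only [mu] at h1 h2 hl
      omega
    obtain ⟨x, hx⟩ := hne
    simp only [Finset.mem_inter] at hx
    exact ⟨x, Finset.mem_inter.2 ⟨hx.1.1, hx.2.1⟩⟩
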